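/- If a 0-1 matrix A admits a voter-contains-candidate-interval explanation (closed intervals I_i for rows and J_c for columns with A[i][c] = 1 iff J_c ⊆ I_i), then A is linearly consistent: any joint linear order of rows by increasing left endpoint of I_i and columns by increasing right endpoint of J_c witnesses linear consistency. -/
import Mathlib


/-- If `A` admits a voter-contains-candidate-interval explanation (closed intervals
`[L i, R i]` for rows and `[l c, r c]` for columns with `A[i][c] = 1` iff
`L i ≤ l c ∧ r c ≤ R i`), then any joint strict linear order of rows by increasing left
endpoint and columns by increasing right endpoint witnesses linear consistency. -/
theorem vcci_implies_lc {n m : ℕ} (A : Fin n → Fin m → Bool)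
    (L R : Fin n → ℝ) (l r : Fin m → ℝ)
    (hI : ∀ i, L i ≤ R i) (hJ : ∀ c, l c ≤ r c)
    (hA : ∀ i c, A i c = true ↔ (L i ≤ l c ∧ r c ≤ R i))
    (ord : (Fin n ⊕ Fin m) → (Fin n ⊕ Fin m) → Prop)
    (hSTO : IsStrictTotalOrder _ ord)
    (hrow : ∀ i j : Fin n, ord (Sum.inl i) (Sum.inl j) → L i ≤ L j)
    (hcol : ∀ a b : Fin m, ord (Sum.inr a) (Sum.inr b) → r a ≤ r b) :
    ∀ (i j : Fin n) (a b : Fin m), ord (Sum.inl i) (Sum.inl j) → ord (Sum.inr a) (Sum.inr b) →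
      A i b = true → A j a = true → A i a = true := by
  intro i j a b hij hab hib hja
  rw [hA] at *
  exact ⟨le_trans (hrow i j hij) (hja.1), le_trans (hcol a b hab) (hib.2)⟩
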